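/- For all p = 2^n with n ≥ 3 and all distinct i and j from 1 to p, M_p[i,j] = ε·M_p^*[i, σ_{p,i}(j)] = ε·M_p^*[σ_{p,j}(i), j], where ε = −1 if |j−i| = p/2 and ε = +1 otherwise. -/

import Mathlib

/-- The matrix `M₄` (1-indexed). -/
def M4 (i j : ℕ) : ℤ :=
  (([[0,1,2,3],[-1,0,3,-2],[-2,-3,0,1],[-3,2,-1,0]] : List (List ℤ)).getD (i-1) []).getD (j-1) 0

/-- The matrix `M₄*` (1-indexed). -/
def M4s (i j : ℕ) : ℤ :=
  (([[0,-2,-3,-1],[2,0,1,-3],[3,-1,0,2],[1,3,-2,0]] : List (List ℤ)).getD (i-1) []).getD (j-1) 0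

/-- For block-index difference `d`, `blockSC d = (s, c)` means that the corresponding
4×4 block of `M_p` is `s·M₄ + c·I` (and the block of `M_p*` is `s·M₄* − c·I`):
`(1,0)` if `d = 0`; `(-1,4)` if `d ≡ 1 (mod 4)`; `(-1,-4)` if `d ≡ -1 (mod 4)`;
`(1, x+4)` if `d = y·2^x`, `x ≥ 1`, `y ≡ 1 (mod 4)`;
`(1, -(x+4))` if `d = y·2^x`, `x ≥ 1`, `y ≡ -1 (mod 4)`. -/
def blockSC (d : ℤ) : ℤ × ℤ :=
  if d = 0 then (1, 0)
  else if d % 4 = 1 then (-1, 4)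
  else if d % 4 = 3 then (-1, -4)
  else
    let x : ℕ := d.natAbs.factorization 2
    if (d / (2:ℤ)^x) % 4 = 1 then (1, (x:ℤ) + 4) else (1, -((x:ℤ) + 4))

/-- Entry `(i,j)` (1-indexed) of `M_p`, for any `p = 2^n ≥ 4` and `1 ≤ i,j ≤ p`;
the defining block formula depends only on `i` and `j`, not on `p`. -/
def Ment (i j : ℕ) : ℤ :=
  let d : ℤ := (((j-1)/4 : ℕ) : ℤ) - (((i-1)/4 : ℕ) : ℤ)
  (blockSC d).1 * M4 ((i-1) % 4 + 1) ((j-1) % 4 + 1)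
    + (if (i-1) % 4 = (j-1) % 4 then (blockSC d).2 else 0)

/-- Entry `(i,j)` (1-indexed) of `M_p*`. -/
def Ments (i j : ℕ) : ℤ :=
  let d : ℤ := (((j-1)/4 : ℕ) : ℤ) - (((i-1)/4 : ℕ) : ℤ)
  (blockSC d).1 * M4s ((i-1) % 4 + 1) ((j-1) % 4 + 1)
    + (if (i-1) % 4 = (j-1) % 4 then -(blockSC d).2 else 0)

/-- The `p × p` matrix `M_p`, `p = 2^n`, as a function on 1-based indices
(entries outside the index range `1,…,p` are set to `0`). -/
def Mp (n i j : ℕ) : ℤ :=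
  if 1 ≤ i ∧ i ≤ 2^n ∧ 1 ≤ j ∧ j ≤ 2^n then Ment i j else 0

/-- The `p × p` matrix `M_p*`, `p = 2^n`, as a function on 1-based indices. -/
def Mps (n i j : ℕ) : ℤ :=
  if 1 ≤ i ∧ i ≤ 2^n ∧ 1 ≤ j ∧ j ≤ 2^n then Ments i j else 0

/-- The base mappings `σ_{4,k}` : `sigma4 k i = σ_{4,k}(i)` (value `0` at the
undefined point `i = k`). -/
def sigma4 (k i : ℕ) : ℕ :=
  (([[0,4,2,3],[3,0,4,1],[4,1,0,2],[2,3,1,0]] : List (List ℕ)).getD (k-1) []).getD (i-1) 0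

/-- The mappings `σ_{p,k}` for `p = 2^n`: `sigma n k i = σ_{2^n, k}(i)`
(value `0` at the undefined point `i = k`, and junk values for `n < 2`). -/
def sigma : ℕ → ℕ → ℕ → ℕ
  | 0, _, _ => 0
  | 1, _, _ => 0
  | 2, k, i => sigma4 k i
  | n+3, k, i =>
    let P := 2^(n+2)
    if k ≤ P then
      if i = k + P then i
      else if i ≤ P then sigma (n+2) k i + P
      else sigma (n+2) k (i - P)
    else
      if i = k - P then i
      else if i ≤ P then sigma (n+2) (k - P) i + P
      else sigma (n+2) (k - P) (i - P)

lemma blockSC_s (d : ℤ) : (blockSC d).1 = if 2 ∣ d then 1 else -1 := by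
  unfold blockSC
  split_ifs with h1 h2 h3 h4 <;>
    first
      | (simp_all; done)
      | (simp only []; split <;> simp_all <;> omega)
      | (simp_all; omega)

lemma blockSC_c_ne (d : ℤ) (hd : d ≠ 0) :
    (blockSC d).2 ≤ -4 ∨ 4 ≤ (blockSC d).2 := by
  unfold blockSC
  split_ifs with h1 h2 h3 <;>
    first
      | (simp_all; done)
      | (simp only []; split <;> simp_all <;> omega)
      | (simp_all; omega)

lemma fact_eq (x : ℕ) (q : ℤ) (hq : q % 2 = 1) :
    ((2^x * q : ℤ)).natAbs.factorization 2 = x := by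
  have hq0 : q ≠ 0 := by omega
  have h1 : ((2^x * q : ℤ)).natAbs = 2^x * q.natAbs := by
    rw [Int.natAbs_mul, Int.natAbs_pow]; rfl
  rw [h1, Nat.factorization_mul (by positivity) (by simpa using hq0)]
  have h2 : ¬ (2 ∣ q.natAbs) := by omega
  simp [Nat.factorization_eq_zero_of_not_dvd h2, Nat.Prime.factorization_pow Nat.prime_two]

lemma blockSC_even (x : ℕ) (hx : 1 ≤ x) (q : ℤ) (hq : q % 2 = 1) :
    blockSC (2^x * q) = (1, if q % 4 = 1 then (x:ℤ) + 4 else -((x:ℤ)+4)) := by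
  have hq0 : q ≠ 0 := by omega
  have hd0 : (2^x * q : ℤ) ≠ 0 := by positivity
  have h2 : (2:ℤ) ∣ 2^x * q := Dvd.dvd.mul_right (dvd_pow_self 2 (by omega)) q
  have hdiv : (2^x * q : ℤ) / 2^x = q := Int.mul_ediv_cancel_left q (by positivity)
  unfold blockSC
  rw [if_neg hd0, if_neg (by omega), if_neg (by omega)]
  simp only [fact_eq x q hq, hdiv]
  have : q % 4 = 1 ∨ q % 4 = 3 := by omega
  rcases this with h | h <;> simp [h]

lemma blockSC_odd (q : ℤ) (hq : q % 2 = 1) :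
    blockSC q = (-1, if q % 4 = 1 then 4 else -4) := by
  have : q % 4 = 1 ∨ q % 4 = 3 := by omega
  unfold blockSC
  rcases this with h | h <;> rw [if_neg (by omega)] <;> simp [h] <;> omega

lemma exists_rep (d : ℤ) (hd : d ≠ 0) : ∃ x q, d = 2^x * q ∧ q % 2 = 1 := by
  have hn : d.natAbs ≠ 0 := by omega
  obtain ⟨m, hm⟩ := Nat.ordProj_dvd d.natAbs 2
  set x := d.natAbs.factorization 2 with hx
  have hmodd : ¬ 2 ∣ m := by
    intro ⟨k, hk⟩
    have : 2^(x+1) ∣ d.natAbs := ⟨k, by rw [hm, hk]; ring⟩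
    exact Nat.pow_succ_factorization_not_dvd hn Nat.prime_two this
  rcases Int.natAbs_eq d with h | h
  · exact ⟨x, m, by rw [h, hm]; push_cast; ring, by omega⟩
  · exact ⟨x, -(m:ℤ), by rw [h, hm]; push_cast; ring, by omega⟩

lemma blockSC_zero : blockSC 0 = (1, 0) := by simp [blockSC]

lemma blockSC_neg (d : ℤ) : blockSC (-d) = ((blockSC d).1, -(blockSC d).2) := by
  rcases eq_or_ne d 0 with rfl | hd
  · simp [blockSC_zero]
  obtain ⟨x, q, rfl, hq⟩ := exists_rep d hd
  rcases Nat.eq_zero_or_pos x with rfl | hx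
  · simp only [pow_zero, one_mul]
    rw [blockSC_odd q hq, blockSC_odd (-q) (by omega)]
    have : q % 4 = 1 ∨ q % 4 = 3 := by omega
    rcases this with h | h
    · have h' : (-q) % 4 = 3 := by omega
      simp [h, h']
    · have h' : (-q) % 4 = 1 := by omega
      simp [h, h', show ¬ (q % 4 = 1) from by omega]
  · have : -(2^x * q) = 2^x * (-q) := by ring
    rw [this, blockSC_even x hx q hq, blockSC_even x hx (-q) (by omega)]
    have : q % 4 = 1 ∨ q % 4 = 3 := by omega
    rcases this with h | h <;> simp [h, show (-q)%4 = 3 ↔ q%4 = 1 from by omega] <;> omega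

lemma c_shift (m : ℕ) (hm : 1 ≤ m) (d : ℤ) (hd0 : d ≠ 0) (hd : d.natAbs < 2^m) :
    (blockSC (d + 2^m)).2 = (if d.natAbs = 2^(m-1) then -1 else 1) * (blockSC d).2 := by
  obtain ⟨x, q, rfl, hq⟩ := exists_rep d hd0
  have hq0 : q ≠ 0 := by omega
  have hqabs : 1 ≤ q.natAbs := by omega
  have habs : ((2:ℤ)^x * q).natAbs = 2^x * q.natAbs := by
    rw [Int.natAbs_mul, Int.natAbs_pow]; rfl
  have hxm : x < m := by
    by_contra h
    have h2 : (2:ℕ)^m ≤ 2^x := Nat.pow_le_pow_right (by norm_num) (by omega)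
    have h3 : (2:ℕ)^x ≤ 2^x * q.natAbs := Nat.le_mul_of_pos_right _ (by omega)
    omega
  have key : (2:ℤ)^x * q + 2^m = 2^x * (q + 2^(m-x)) := by
    have : (2:ℤ)^m = 2^x * 2^(m-x) := by rw [← pow_add]; congr 1; omega
    rw [this]; ring
  rcases Nat.eq_zero_or_pos x with rfl | hx
  · -- d odd
    simp only [pow_zero, one_mul] at *
    rcases Nat.lt_or_ge 1 m with hm2 | hm1
    · -- m ≥ 2
      have h4 : (2:ℤ)^m = 4 * 2^(m-2) := by
        calc (2:ℤ)^m = 2^(2+(m-2)) := by congr 1; omega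
          _ = 4 * 2^(m-2) := by rw [pow_add]; ring
      rw [blockSC_odd q hq, blockSC_odd (q + 2^m) (by omega)]
      have hne : ¬ (q.natAbs = 2^(m-1)) := by
        have : (2:ℕ)^(m-1) = 2 * 2^(m-2) := by
          calc (2:ℕ)^(m-1) = 2^(1+(m-2)) := by congr 1; omega
            _ = 2 * 2^(m-2) := by rw [pow_add]; ring
        omega
      rw [if_neg hne]
      have : q % 4 = 1 ∨ q % 4 = 3 := by omega
      rcases this with h | h <;> simp [h, show (q + 2^m) % 4 = q % 4 from by omega]
    · -- m = 1
      have hm1' : m = 1 := by omega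
      subst hm1'
      have : q = 1 ∨ q = -1 := by omega
      rcases this with rfl | rfl <;> norm_num <;>
        rw [blockSC_odd _ (by norm_num), blockSC_odd _ (by norm_num)] <;> norm_num
  · -- x ≥ 1
    rw [key, blockSC_even x hx q hq, blockSC_even x hx (q + 2^(m-x)) (by
      have : (2:ℤ)^(m-x) % 2 = 0 := by
        have : (2:ℤ)^(m-x) = 2 * 2^(m-x-1) := by
          calc (2:ℤ)^(m-x) = 2^(1+(m-x-1)) := by congr 1; omega
            _ = 2 * 2^(m-x-1) := by rw [pow_add]; ring
        omega
      omega)]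
    rcases Nat.lt_or_ge x (m-1) with hxlt | hxe
    · -- x < m-1 : same class
      have h4 : (2:ℤ)^(m-x) = 4 * 2^(m-x-2) := by
        calc (2:ℤ)^(m-x) = 2^(2+(m-x-2)) := by congr 1; omega
          _ = 4 * 2^(m-x-2) := by rw [pow_add]; ring
      have hsame : (q + 2^(m-x)) % 4 = q % 4 := by omega
      have hne : ¬ (2^x * q.natAbs = 2^(m-1)) := by
        intro h
        have h5 : (2:ℕ)^(m-1) = 2^x * 2^(m-1-x) := by rw [← pow_add]; congr 1; omega
        have h6 : q.natAbs = 2^(m-1-x) := by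
          have : (0:ℕ) < 2^x := Nat.pow_pos (show 0 < 2 by norm_num)
          exact Nat.eq_of_mul_eq_mul_left this (by omega)
        have h7 : (2:ℕ)^(m-1-x) = 2 * 2^(m-2-x) := by
          calc (2:ℕ)^(m-1-x) = 2^(1+(m-2-x)) := by congr 1; omega
            _ = 2 * 2^(m-2-x) := by rw [pow_add]; ring
        omega
      rw [habs, if_neg hne, hsame]
      simp
    · -- x = m-1
      have hxe' : x = m - 1 := by omega
      have hmx : m - x = 1 := by omega
      rw [hmx]
      have hq1 : q.natAbs = 1 := by
        by_contra h
        have h3 : 3 ≤ q.natAbs := by omega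
        have h5 : (2:ℕ)^m = 2^x * 2 := by rw [← pow_succ]; congr 1; omega
        have h6 : 2^x * 3 ≤ 2^x * q.natAbs := Nat.mul_le_mul_left _ h3
        omega
      have heq : 2^x * q.natAbs = 2^(m-1) := by rw [hq1, hxe']; ring
      rw [habs, if_pos heq]
      have : q = 1 ∨ q = -1 := by omega
      rcases this with rfl | rfl <;> norm_num

lemma c_shift_sub (m : ℕ) (hm : 1 ≤ m) (d : ℤ) (hd0 : d ≠ 0) (hd : d.natAbs < 2^m) :
    (blockSC (d - 2^m)).2 = (if d.natAbs = 2^(m-1) then -1 else 1) * (blockSC d).2 := by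
  have h := c_shift m hm (-d) (by omega) (by omega)
  have e1 : (-d) + 2^m = -(d - 2^m) := by ring
  rw [e1, blockSC_neg, blockSC_neg] at h
  have e2 : (-d).natAbs = d.natAbs := by omega
  rw [e2] at h
  split_ifs at h ⊢ <;> omega

lemma s_shift (m : ℕ) (hm : 1 ≤ m) (d : ℤ) :
    (blockSC (d + 2^m)).1 = (blockSC d).1 := by
  have h2 : (2:ℤ)^m = 2 * 2^(m-1) := by
    calc (2:ℤ)^m = 2^(1+(m-1)) := by congr 1; omega
      _ = 2 * 2^(m-1) := by rw [pow_add]; ring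
  rw [blockSC_s, blockSC_s]
  have h3 : (2 ∣ d + 2^m) ↔ (2 ∣ d) := by omega
  simp only [h3]

lemma s_shift_sub (m : ℕ) (hm : 1 ≤ m) (d : ℤ) :
    (blockSC (d - 2^m)).1 = (blockSC d).1 := by
  have h := s_shift m hm (d - 2^m)
  simpa using h.symm

/-- Generic entry function: `Ment = Ent M4 1`, `Ments = Ent M4s (-1)`. -/
def Ent (g : ℕ → ℕ → ℤ) (e : ℤ) (i j : ℕ) : ℤ :=
  (blockSC ((((j-1)/4 : ℕ) : ℤ) - (((i-1)/4 : ℕ) : ℤ))).1 * g ((i-1) % 4 + 1) ((j-1) % 4 + 1)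
    + (if (i-1) % 4 = (j-1) % 4 then
        e * (blockSC ((((j-1)/4 : ℕ) : ℤ) - (((i-1)/4 : ℕ) : ℤ))).2 else 0)

lemma Ment_ent (i j : ℕ) : Ment i j = Ent M4 1 i j := by
  unfold Ment Ent; split <;> ring

lemma Ments_ent (i j : ℕ) : Ments i j = Ent M4s (-1) i j := by
  unfold Ments Ent; split <;> ring

section EntLemmas

lemma pow_facts (n : ℕ) (hn : 3 ≤ n) :
    (2:ℕ)^n = 4 * 2^(n-2) ∧ (2:ℕ)^(n-2) = 2 * 2^(n-3) ∧ (2:ℕ)^(n-1) = 2 * 2^(n-2)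
      ∧ 1 ≤ (2:ℕ)^(n-3) := by
  refine ⟨?_, ?_, ?_, Nat.one_le_two_pow⟩
  · calc (2:ℕ)^n = 2^(2+(n-2)) := by congr 1; omega
      _ = 4 * 2^(n-2) := by rw [pow_add]; ring
  · calc (2:ℕ)^(n-2) = 2^(1+(n-3)) := by congr 1; omega
      _ = 2 * 2^(n-3) := by rw [pow_add]; ring
  · calc (2:ℕ)^(n-1) = 2^(1+(n-2)) := by congr 1; omega
      _ = 2 * 2^(n-2) := by rw [pow_add]; ring

lemma Ent_shift_col (g : ℕ → ℕ → ℤ) (hg : ∀ r, r < 4 → g (r+1) (r+1) = 0) (e : ℤ)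
    (n : ℕ) (hn : 3 ≤ n) (a b : ℕ) (ha1 : 1 ≤ a) (ha2 : a ≤ 2^n)
    (hb1 : 1 ≤ b) (hb2 : b ≤ 2^n) (hab : a ≠ b) :
    Ent g e a (b + 2^n) =
      (if ((b:ℤ) - (a:ℤ)).natAbs = 2^(n-1) then -1 else 1) * Ent g e a b := by
  obtain ⟨hf1, hf2, hf3, hf4⟩ := pow_facts n hn
  have hdiv : (b + 2^n - 1)/4 = (b-1)/4 + 2^(n-2) := by omega
  have hmod : (b + 2^n - 1) % 4 = (b-1) % 4 := by omega
  unfold Ent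
  rw [hdiv, hmod]
  have hcast : (((b-1)/4 + 2^(n-2) : ℕ) : ℤ) = (((b-1)/4 : ℕ) : ℤ) + (2:ℤ)^(n-2) := by
    push_cast; ring
  rw [hcast]
  have harr : (((b-1)/4 : ℕ) : ℤ) + (2:ℤ)^(n-2) - (((a-1)/4 : ℕ) : ℤ)
      = ((((b-1)/4 : ℕ) : ℤ) - (((a-1)/4 : ℕ) : ℤ)) + 2^(n-2) := by ring
  rw [harr]
  set d : ℤ := (((b-1)/4 : ℕ) : ℤ) - (((a-1)/4 : ℕ) : ℤ) with hd
  by_cases hr : (a-1) % 4 = (b-1) % 4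
  · have hd0 : d ≠ 0 := by omega
    have hdlt : d.natAbs < 2^(n-2) := by omega
    rw [if_pos hr, if_pos hr, hr, hg _ (by omega), mul_zero, mul_zero,
      c_shift (n-2) (by omega) d hd0 hdlt]
    have hmm : n - 2 - 1 = n - 3 := by omega
    rw [hmm]
    have hiff : (((b:ℤ) - (a:ℤ)).natAbs = 2^(n-1)) ↔ (d.natAbs = 2^(n-3)) := by omega
    by_cases hc : ((b:ℤ) - (a:ℤ)).natAbs = 2^(n-1)
    · rw [if_pos hc, if_pos (hiff.mp hc)]; ring
    · rw [if_neg hc, if_neg (fun h => hc (hiff.mpr h))]; ring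
  · rw [if_neg hr, if_neg hr, s_shift (n-2) (by omega) d]
    have hc : ¬ (((b:ℤ) - (a:ℤ)).natAbs = 2^(n-1)) := by omega
    rw [if_neg hc]; ring

lemma Ent_shift_row (g : ℕ → ℕ → ℤ) (hg : ∀ r, r < 4 → g (r+1) (r+1) = 0) (e : ℤ)
    (n : ℕ) (hn : 3 ≤ n) (a b : ℕ) (ha1 : 1 ≤ a) (ha2 : a ≤ 2^n)
    (hb1 : 1 ≤ b) (hb2 : b ≤ 2^n) (hab : a ≠ b) :
    Ent g e (a + 2^n) b =
      (if ((b:ℤ) - (a:ℤ)).natAbs = 2^(n-1) then -1 else 1) * Ent g e a b := by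
  obtain ⟨hf1, hf2, hf3, hf4⟩ := pow_facts n hn
  have hdiv : (a + 2^n - 1)/4 = (a-1)/4 + 2^(n-2) := by omega
  have hmod : (a + 2^n - 1) % 4 = (a-1) % 4 := by omega
  unfold Ent
  rw [hdiv, hmod]
  have hcast : (((a-1)/4 + 2^(n-2) : ℕ) : ℤ) = (((a-1)/4 : ℕ) : ℤ) + (2:ℤ)^(n-2) := by
    push_cast; ring
  rw [hcast]
  have harr : (((b-1)/4 : ℕ) : ℤ) - ((((a-1)/4 : ℕ) : ℤ) + (2:ℤ)^(n-2))
      = ((((b-1)/4 : ℕ) : ℤ) - (((a-1)/4 : ℕ) : ℤ)) - 2^(n-2) := by ring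
  rw [harr]
  set d : ℤ := (((b-1)/4 : ℕ) : ℤ) - (((a-1)/4 : ℕ) : ℤ) with hd
  by_cases hr : (a-1) % 4 = (b-1) % 4
  · have hd0 : d ≠ 0 := by omega
    have hdlt : d.natAbs < 2^(n-2) := by omega
    rw [if_pos hr, if_pos hr, hr, hg _ (by omega), mul_zero, mul_zero,
      c_shift_sub (n-2) (by omega) d hd0 hdlt]
    have hmm : n - 2 - 1 = n - 3 := by omega
    rw [hmm]
    have hiff : (((b:ℤ) - (a:ℤ)).natAbs = 2^(n-1)) ↔ (d.natAbs = 2^(n-3)) := by omega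
    by_cases hc : ((b:ℤ) - (a:ℤ)).natAbs = 2^(n-1)
    · rw [if_pos hc, if_pos (hiff.mp hc)]; ring
    · rw [if_neg hc, if_neg (fun h => hc (hiff.mpr h))]; ring
  · rw [if_neg hr, if_neg hr, s_shift_sub (n-2) (by omega) d]
    have hc : ¬ (((b:ℤ) - (a:ℤ)).natAbs = 2^(n-1)) := by omega
    rw [if_neg hc]; ring

lemma Ent_shift_diag (g : ℕ → ℕ → ℤ) (e : ℤ)
    (n : ℕ) (hn : 3 ≤ n) (a b : ℕ) (ha1 : 1 ≤ a) (hb1 : 1 ≤ b) :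
    Ent g e (a + 2^n) (b + 2^n) = Ent g e a b := by
  obtain ⟨hf1, hf2, hf3, hf4⟩ := pow_facts n hn
  have hdiva : (a + 2^n - 1)/4 = (a-1)/4 + 2^(n-2) := by omega
  have hmoda : (a + 2^n - 1) % 4 = (a-1) % 4 := by omega
  have hdivb : (b + 2^n - 1)/4 = (b-1)/4 + 2^(n-2) := by omega
  have hmodb : (b + 2^n - 1) % 4 = (b-1) % 4 := by omega
  unfold Ent
  rw [hdiva, hmoda, hdivb, hmodb]
  have harr : (((b-1)/4 + 2^(n-2) : ℕ) : ℤ) - (((a-1)/4 + 2^(n-2) : ℕ) : ℤ)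
      = (((b-1)/4 : ℕ) : ℤ) - (((a-1)/4 : ℕ) : ℤ) := by push_cast; ring
  rw [harr]

lemma Ent_anti (g : ℕ → ℕ → ℤ) (hg : ∀ r < 4, ∀ s < 4, g (s+1) (r+1) = -g (r+1) (s+1))
    (e : ℤ) (a b : ℕ) :
    Ent g e b a = - Ent g e a b := by
  unfold Ent
  have harr : (((a-1)/4 : ℕ) : ℤ) - (((b-1)/4 : ℕ) : ℤ)
      = -((((b-1)/4 : ℕ) : ℤ) - (((a-1)/4 : ℕ) : ℤ)) := by ring
  rw [harr, blockSC_neg]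
  rw [hg ((a-1) % 4) (by omega) ((b-1) % 4) (by omega)]
  by_cases h : (a-1) % 4 = (b-1) % 4
  · rw [if_pos h, if_pos h.symm]; ring
  · rw [if_neg h, if_neg (fun hh => h hh.symm)]; ring

lemma M4_diag : ∀ r, r < 4 → M4 (r+1) (r+1) = 0 := by decide
lemma M4s_diag : ∀ r, r < 4 → M4s (r+1) (r+1) = 0 := by decide
lemma M4_anti : ∀ r < 4, ∀ s < 4, M4 (s+1) (r+1) = -M4 (r+1) (s+1) := by decide
lemma M4s_anti : ∀ r < 4, ∀ s < 4, M4s (s+1) (r+1) = -M4s (r+1) (s+1) := by decide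

lemma Ment_anti (a b : ℕ) : Ment b a = -Ment a b := by
  rw [Ment_ent, Ment_ent]; exact Ent_anti M4 M4_anti 1 a b

lemma Ments_anti (a b : ℕ) : Ments b a = -Ments a b := by
  rw [Ments_ent, Ments_ent]; exact Ent_anti M4s M4s_anti (-1) a b

lemma Ment_neg_Ments_of_res (a b : ℕ) (h : (a-1) % 4 = (b-1) % 4) :
    Ment a b = -Ments a b := by
  rw [Ment_ent, Ments_ent]
  unfold Ent
  rw [if_pos h, if_pos h, h, M4_diag _ (by omega), M4s_diag _ (by omega)]
  ring

end EntLemmas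

section SigmaLemmas

lemma sigma_succ (n : ℕ) (hn : 2 ≤ n) (k i : ℕ) :
    sigma (n+1) k i =
      if k ≤ 2^n then
        if i = k + 2^n then i
        else if i ≤ 2^n then sigma n k i + 2^n
        else sigma n k (i - 2^n)
      else
        if i = k - 2^n then i
        else if i ≤ 2^n then sigma n (k - 2^n) i + 2^n
        else sigma n (k - 2^n) (i - 2^n) := by
  obtain ⟨m, rfl⟩ : ∃ m, n = m + 2 := ⟨n - 2, by omega⟩
  rfl

lemma sigma_range : ∀ n, 2 ≤ n → ∀ k i, 1 ≤ k → k ≤ 2^n → 1 ≤ i → i ≤ 2^n → i ≠ k →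
    1 ≤ sigma n k i ∧ sigma n k i ≤ 2^n ∧ sigma n k i ≠ k := by
  intro n
  induction n with
  | zero => omega
  | succ m ih =>
    intro hm k i hk1 hk2 hi1 hi2 hik
    rcases Nat.lt_or_ge m 2 with hm2 | hm2
    · -- m + 1 = 2
      have hm1 : m = 1 := by omega
      subst hm1
      have hk4 : k ≤ 4 := by simpa using hk2
      have hi4 : i ≤ 4 := by simpa using hi2
      clear hk2 hi2 hm ih
      interval_cases k <;> interval_cases i <;> simp_all <;> decide
    · have hp : (2:ℕ)^(m+1) = 2 * 2^m := by rw [pow_succ]; ring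
      have hp1 : 1 ≤ (2:ℕ)^m := Nat.one_le_two_pow
      rw [sigma_succ m hm2 k i]
      split_ifs with h1 h2 h3 h4 h5
      · omega
      · have := ih hm2 k i (by omega) (by omega) (by omega) (by omega)
        omega
      · have := ih hm2 k (i - 2^m) (by omega) (by omega) (by omega) (by omega)
        omega
      · omega
      · have := ih hm2 (k - 2^m) i (by omega) (by omega) (by omega) (by omega)
        omega
      · have := ih hm2 (k - 2^m) (i - 2^m) (by omega) (by omega) (by omega) (by omega)
        omega

lemma sigma_dist (n : ℕ) (hn : 3 ≤ n) (k i : ℕ) (hk1 : 1 ≤ k) (hk2 : k ≤ 2^n)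
    (hi1 : 1 ≤ i) (hi2 : i ≤ 2^n) (hik : i ≠ k) :
    (((sigma n k i : ℕ) : ℤ) - (k : ℤ)).natAbs = 2^(n-1) ↔
      ((i : ℤ) - (k : ℤ)).natAbs = 2^(n-1) := by
  obtain ⟨m, rfl⟩ : ∃ m, n = m + 1 := ⟨n - 1, by omega⟩
  have hm2 : 2 ≤ m := by omega
  have hp : (2:ℕ)^(m+1) = 2 * 2^m := by rw [pow_succ]; ring
  have hp1 : 1 ≤ (2:ℕ)^m := Nat.one_le_two_pow
  simp only [Nat.add_sub_cancel]
  rw [sigma_succ m hm2 k i]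
  split_ifs with h1 h2 h3 h4 h5
  · omega
  · have := sigma_range m hm2 k i (by omega) (by omega) (by omega) (by omega)
    omega
  · have := sigma_range m hm2 k (i - 2^m) (by omega) (by omega) (by omega) (by omega)
    omega
  · omega
  · have := sigma_range m hm2 (k - 2^m) i (by omega) (by omega) (by omega) (by omega)
    omega
  · have := sigma_range m hm2 (k - 2^m) (i - 2^m) (by omega) (by omega) (by omega) (by omega)
    omega

end SigmaLemmas

/-- The induction motive: statement 10 (first equation) at the `Ment` level. -/
def Good (n : ℕ) : Prop := ∀ i j : ℕ, 1 ≤ i → i ≤ 2^n → 1 ≤ j → j ≤ 2^n → i ≠ j →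
  Ment i j = (if ((j:ℤ) - (i:ℤ)).natAbs = 2^(n-1) then -1 else 1) * Ments i (sigma n i j)

lemma good_three : Good 3 := by
  intro i j hi1 hi2 hj1 hj2 hij
  have h : ∀ i < 9, ∀ j < 9, 1 ≤ i → 1 ≤ j → i ≠ j →
      Ment i j = (if ((j:ℤ) - (i:ℤ)).natAbs = 4 then -1 else 1) * Ments i (sigma 3 i j) := by
    decide
  have := h i (by norm_num at hi2 ⊢; omega) j (by norm_num at hj2 ⊢; omega) hi1 hj1 hij
  simpa using this

lemma Ment_shift_col (n : ℕ) (hn : 3 ≤ n) (a b : ℕ) (ha1 : 1 ≤ a) (ha2 : a ≤ 2^n)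
    (hb1 : 1 ≤ b) (hb2 : b ≤ 2^n) (hab : a ≠ b) :
    Ment a (b + 2^n) = (if ((b:ℤ) - (a:ℤ)).natAbs = 2^(n-1) then -1 else 1) * Ment a b := by
  rw [Ment_ent, Ment_ent]; exact Ent_shift_col M4 M4_diag 1 n hn a b ha1 ha2 hb1 hb2 hab

lemma Ment_shift_row (n : ℕ) (hn : 3 ≤ n) (a b : ℕ) (ha1 : 1 ≤ a) (ha2 : a ≤ 2^n)
    (hb1 : 1 ≤ b) (hb2 : b ≤ 2^n) (hab : a ≠ b) :
    Ment (a + 2^n) b = (if ((b:ℤ) - (a:ℤ)).natAbs = 2^(n-1) then -1 else 1) * Ment a b := by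
  rw [Ment_ent, Ment_ent]; exact Ent_shift_row M4 M4_diag 1 n hn a b ha1 ha2 hb1 hb2 hab

lemma Ment_shift_diag (n : ℕ) (hn : 3 ≤ n) (a b : ℕ) (ha1 : 1 ≤ a) (hb1 : 1 ≤ b) :
    Ment (a + 2^n) (b + 2^n) = Ment a b := by
  rw [Ment_ent, Ment_ent]; exact Ent_shift_diag M4 1 n hn a b ha1 hb1

lemma Ments_shift_col (n : ℕ) (hn : 3 ≤ n) (a b : ℕ) (ha1 : 1 ≤ a) (ha2 : a ≤ 2^n)
    (hb1 : 1 ≤ b) (hb2 : b ≤ 2^n) (hab : a ≠ b) :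
    Ments a (b + 2^n) = (if ((b:ℤ) - (a:ℤ)).natAbs = 2^(n-1) then -1 else 1) * Ments a b := by
  rw [Ments_ent, Ments_ent]; exact Ent_shift_col M4s M4s_diag (-1) n hn a b ha1 ha2 hb1 hb2 hab

lemma Ments_shift_row (n : ℕ) (hn : 3 ≤ n) (a b : ℕ) (ha1 : 1 ≤ a) (ha2 : a ≤ 2^n)
    (hb1 : 1 ≤ b) (hb2 : b ≤ 2^n) (hab : a ≠ b) :
    Ments (a + 2^n) b = (if ((b:ℤ) - (a:ℤ)).natAbs = 2^(n-1) then -1 else 1) * Ments a b := by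
  rw [Ments_ent, Ments_ent]; exact Ent_shift_row M4s M4s_diag (-1) n hn a b ha1 ha2 hb1 hb2 hab

lemma Ments_shift_diag (n : ℕ) (hn : 3 ≤ n) (a b : ℕ) (ha1 : 1 ≤ a) (hb1 : 1 ≤ b) :
    Ments (a + 2^n) (b + 2^n) = Ments a b := by
  rw [Ments_ent, Ments_ent]; exact Ent_shift_diag M4s (-1) n hn a b ha1 hb1

lemma good_succ (n : ℕ) (hn : 3 ≤ n) (IH : Good n) : Good (n+1) := by
  intro i j hi1 hi2 hj1 hj2 hij
  have hp : (2:ℕ)^(n+1) = 2 * 2^n := by rw [pow_succ]; ring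
  have hp1 : 1 ≤ (2:ℕ)^n := Nat.one_le_two_pow
  have h4 : (2:ℕ)^n = 4 * 2^(n-2) := (pow_facts n hn).1
  simp only [Nat.add_sub_cancel]
  rw [sigma_succ n (by omega) i j]
  by_cases hk : i ≤ 2^n
  · rw [if_pos hk]
    by_cases hfix : j = i + 2^n
    · rw [if_pos hfix]
      subst hfix
      rw [if_pos (by omega : (((i + 2^n : ℕ):ℤ) - (i:ℤ)).natAbs = 2^n)]
      rw [Ment_neg_Ments_of_res i (i + 2^n) (by omega)]
      ring
    · rw [if_neg hfix]
      by_cases hj : j ≤ 2^n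
      · rw [if_pos hj, if_neg (by omega : ¬ (((j:ℕ):ℤ) - (i:ℤ)).natAbs = 2^n), one_mul]
        obtain ⟨hs1, hs2, hs3⟩ := sigma_range n (by omega) i j hi1 hk hj1 hj (by omega)
        rw [Ments_shift_col n hn i (sigma n i j) hi1 hk hs1 hs2 (by omega)]
        rw [IH i j hi1 hk hj1 hj hij]
        have hd := sigma_dist n hn i j hi1 hk hj1 hj (by omega)
        by_cases hc : (((j:ℕ):ℤ) - (i:ℤ)).natAbs = 2^(n-1)
        · rw [if_pos hc, if_pos (hd.mpr hc)]
        · rw [if_neg hc, if_neg (fun h => hc (hd.mp h))]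
      · rw [if_neg hj]
        obtain ⟨b, rfl⟩ : ∃ b, j = b + 2^n := ⟨j - 2^n, by omega⟩
        simp only [Nat.add_sub_cancel]
        have hb1 : 1 ≤ b := by omega
        have hb2 : b ≤ 2^n := by omega
        have hib : i ≠ b := by omega
        rw [if_neg (by omega : ¬ (((b + 2^n : ℕ):ℤ) - (i:ℤ)).natAbs = 2^n), one_mul]
        rw [Ment_shift_col n hn i b hi1 hk hb1 hb2 hib]
        rw [IH i b hi1 hk hb1 hb2 hib]
        by_cases hc : (((b:ℕ):ℤ) - (i:ℤ)).natAbs = 2^(n-1)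
        · rw [if_pos hc]; ring
        · rw [if_neg hc]; ring
  · rw [if_neg hk]
    obtain ⟨a, rfl⟩ : ∃ a, i = a + 2^n := ⟨i - 2^n, by omega⟩
    simp only [Nat.add_sub_cancel]
    have ha1 : 1 ≤ a := by omega
    have ha2 : a ≤ 2^n := by omega
    by_cases hfix : j = a
    · subst hfix
      rw [if_pos rfl, if_pos (by omega : ((j:ℤ) - ((j + 2^n : ℕ):ℤ)).natAbs = 2^n)]
      rw [Ment_neg_Ments_of_res (j + 2^n) j (by omega)]
      ring
    · rw [if_neg (by omega : ¬ j = a)]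
      by_cases hj : j ≤ 2^n
      · rw [if_pos hj, if_neg (by omega : ¬ (((j:ℕ):ℤ) - ((a + 2^n : ℕ):ℤ)).natAbs = 2^n),
          one_mul]
        have haj : a ≠ j := by omega
        obtain ⟨hs1, hs2, hs3⟩ := sigma_range n (by omega) a j ha1 ha2 hj1 hj (by omega)
        rw [Ments_shift_diag n hn a (sigma n a j) ha1 hs1]
        rw [Ment_shift_row n hn a j ha1 ha2 hj1 hj haj]
        rw [IH a j ha1 ha2 hj1 hj haj]
        by_cases hc : (((j:ℕ):ℤ) - (a:ℤ)).natAbs = 2^(n-1)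
        · rw [if_pos hc]; ring
        · rw [if_neg hc]; ring
      · rw [if_neg hj]
        obtain ⟨b, rfl⟩ : ∃ b, j = b + 2^n := ⟨j - 2^n, by omega⟩
        simp only [Nat.add_sub_cancel]
        have hb1 : 1 ≤ b := by omega
        have hb2 : b ≤ 2^n := by omega
        have hab : a ≠ b := by omega
        rw [if_neg (by omega :
          ¬ (((b + 2^n : ℕ):ℤ) - ((a + 2^n : ℕ):ℤ)).natAbs = 2^n), one_mul]
        obtain ⟨hs1, hs2, hs3⟩ := sigma_range n (by omega) a b ha1 ha2 hb1 hb2 (by omega)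
        rw [Ment_shift_diag n hn a b ha1 hb1]
        rw [IH a b ha1 ha2 hb1 hb2 hab]
        rw [Ments_shift_row n hn a (sigma n a b) ha1 ha2 hs1 hs2 (by omega)]
        have hd := sigma_dist n hn a b ha1 ha2 hb1 hb2 (by omega)
        by_cases hc : (((b:ℕ):ℤ) - (a:ℤ)).natAbs = 2^(n-1)
        · rw [if_pos hc, if_pos (hd.mpr hc)]
        · rw [if_neg hc, if_neg (fun h => hc (hd.mp h))]

lemma good_all (m : ℕ) (hm : 3 ≤ m) : Good m := by
  induction m, hm using Nat.le_induction with
  | base => exact good_three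
  | succ k hk ih => exact good_succ k hk ih
/-- For all `p = 2^n` with `n ≥ 3` and all distinct `i, j` from 1 to `p`,
`M_p[i,j] = ε·M_p*[i, σ_{p,i}(j)] = ε·M_p*[σ_{p,j}(i), j]`, where `ε = −1` if
`|j−i| = p/2` and `ε = +1` otherwise. -/
theorem stmt10 (n p : ℕ) (hn : 3 ≤ n) (hp : p = 2^n)
    (i j : ℕ) (hi1 : 1 ≤ i) (hi2 : i ≤ p) (hj1 : 1 ≤ j) (hj2 : j ≤ p) (hij : i ≠ j) :
    Mp n i j = (if ((j:ℤ) - (i:ℤ)).natAbs = p/2 then -1 else 1) * Mps n i (sigma n i j) ∧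
    Mp n i j = (if ((j:ℤ) - (i:ℤ)).natAbs = p/2 then -1 else 1) * Mps n (sigma n j i) j := by
  subst hp
  have h2 : (2:ℕ)^n = 2 * 2^(n-1) := by
    calc (2:ℕ)^n = 2^(1+(n-1)) := by congr 1; omega
      _ = 2 * 2^(n-1) := by rw [pow_add]; ring
  have hhalf : (2:ℕ)^n / 2 = 2^(n-1) := by omega
  obtain ⟨hs1, hs2, hs3⟩ := sigma_range n (by omega) i j hi1 hi2 hj1 hj2 (Ne.symm hij)
  obtain ⟨ht1, ht2, ht3⟩ := sigma_range n (by omega) j i hj1 hj2 hi1 hi2 hij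
  rw [hhalf]
  constructor
  · have h := good_all n hn i j hi1 hi2 hj1 hj2 hij
    unfold Mp Mps
    have hin1 : 1 ≤ i ∧ i ≤ 2^n ∧ 1 ≤ j ∧ j ≤ 2^n := ⟨hi1, hi2, hj1, hj2⟩
    have hin2 : 1 ≤ i ∧ i ≤ 2^n ∧ 1 ≤ sigma n i j ∧ sigma n i j ≤ 2^n := ⟨hi1, hi2, hs1, hs2⟩
    rw [if_pos hin1, if_pos hin2]
    exact h
  · have h' := good_all n hn j i hj1 hj2 hi1 hi2 (Ne.symm hij)
    unfold Mp Mps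
    have hin1 : 1 ≤ i ∧ i ≤ 2^n ∧ 1 ≤ j ∧ j ≤ 2^n := ⟨hi1, hi2, hj1, hj2⟩
    have hin2 : 1 ≤ sigma n j i ∧ sigma n j i ≤ 2^n ∧ 1 ≤ j ∧ j ≤ 2^n := ⟨ht1, ht2, hj1, hj2⟩
    rw [if_pos hin1, if_pos hin2]
    have hM : Ment i j = - Ment j i := Ment_anti j i
    have hMs : Ments (sigma n j i) j = - Ments j (sigma n j i) := Ments_anti j (sigma n j i)
    rw [hM, hMs, h',
      show (((i:ℤ) - (j:ℤ)).natAbs) = (((j:ℤ) - (i:ℤ)).natAbs) from by omega]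
    by_cases hc : ((j:ℤ) - (i:ℤ)).natAbs = 2^(n-1)
    · rw [if_pos hc]; ring
    · rw [if_neg hc]; ring
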